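/- arXiv:1611.02824 — 2 statements merged into one kernel-verified Lean document; each statement's English description precedes it below -/
import Mathlib

section
/- Let R(H) ⊆ M(H) be convex, S(L) ⊆ M(L), and R_n(H) = {μ ∈ R(H) : card(supp μ) ≤ n}. Then for all m, n ≥ 1, q(R_{m+n}(H), S(L)) ≤ (m/(m+n)) · q(R_m(H), S(L)) + (n/(m+n)) · q(R_n(H), S(L)); consequently the sequence n ↦ q(R_n(H), S(L)) is quasi-decreasing and converges (in the extended reals) as n → ∞. -/
open MeasureTheory Topology Filter ENNReal

noncomputable section

/-- The vague topology on measures: the coarsest topology making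
`μ ↦ ∫ f dμ` continuous for every continuous compactly supported `f`. -/
def vagueTop (X : Type*) [TopologicalSpace X] [MeasurableSpace X] :
    TopologicalSpace (Measure X) :=
  ⨅ (f : X → ℝ) (_ : Continuous f) (_ : HasCompactSupport f),
    TopologicalSpace.induced (fun μ : Measure X => ∫ x, f x ∂μ) inferInstance

/-- `μ` is concentrated on `H`: every compact set meets the complement of `H`
in a set of zero (outer) measure. -/
def Concentrated {X : Type*} [TopologicalSpace X] [MeasurableSpace X]
    (μ : Measure X) (H : Set X) : Prop :=
  ∀ K : Set X, IsCompact K → μ (K ∩ Hᶜ) = 0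

/-- `M(H)`: the positive regular Radon measures of finite total mass concentrated on `H`. -/
def MM {X : Type*} [TopologicalSpace X] [MeasurableSpace X] (H : Set X) :
    Set (Measure X) :=
  {μ | IsFiniteMeasure μ ∧ μ.Regular ∧ μ.InnerRegular ∧ Concentrated μ H}

/-- `M₁(H)`: probability measures in `M(H)`. -/
def M1 {X : Type*} [TopologicalSpace X] [MeasurableSpace X] (H : Set X) :
    Set (Measure X) :=
  {μ ∈ MM H | IsProbabilityMeasure μ}

/-- The potential `U^μ(y) = ∫ k(x,y) dμ(x)`. -/
def pot {X Y : Type*} [MeasurableSpace X] (k : X → Y → ℝ≥0∞) (μ : Measure X) (y : Y) : ℝ≥0∞ :=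
  ∫⁻ x, k x y ∂μ

/-- The mutual energy `E(μ,ν) = ∫∫ k(x,y) dμ(x)dν(y)`. -/
def energy {X Y : Type*} [MeasurableSpace X] [MeasurableSpace Y] (k : X → Y → ℝ≥0∞)
    (μ : Measure X) (ν : Measure Y) : ℝ≥0∞ :=
  ∫⁻ p : X × Y, k p.1 p.2 ∂(μ.prod ν)

/-- `q(R,S) = inf_{μ∈R} sup_{ν∈S} E(μ,ν)`. -/
def qup {X Y : Type*} [MeasurableSpace X] [MeasurableSpace Y] (k : X → Y → ℝ≥0∞)
    (R : Set (Measure X)) (S : Set (Measure Y)) : ℝ≥0∞ :=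
  ⨅ μ ∈ R, ⨆ ν ∈ S, energy k μ ν

/-- `q̲(R,S) = sup_{μ∈R} inf_{ν∈S} E(μ,ν)`. -/
def qlow {X Y : Type*} [MeasurableSpace X] [MeasurableSpace Y] (k : X → Y → ℝ≥0∞)
    (R : Set (Measure X)) (S : Set (Measure Y)) : ℝ≥0∞ :=
  ⨆ μ ∈ R, ⨅ ν ∈ S, energy k μ ν

/-- The (Wiener) energy of a set of measures: `w(R) = inf_{μ∈R} E(μ,μ)`. -/
def ww {X : Type*} [MeasurableSpace X] (k : X → X → ℝ≥0∞) (R : Set (Measure X)) : ℝ≥0∞ :=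
  ⨅ μ ∈ R, energy k μ μ

/-- Convexity of a set of measures. -/
def ConvexM {X : Type*} [MeasurableSpace X] (R : Set (Measure X)) : Prop :=
  ∀ μ ∈ R, ∀ ν ∈ R, ∀ a b : ℝ≥0∞, a + b = 1 → a • μ + b • ν ∈ R

/-- The extreme points of a set of measures. -/
def ExtremePts {X : Type*} [MeasurableSpace X] (R : Set (Measure X)) : Set (Measure X) :=
  {σ ∈ R | ∀ μ ∈ R, ∀ ν ∈ R, ∀ a b : ℝ≥0∞, 0 < a → 0 < b → a + b = 1 →
    σ = a • μ + b • ν → σ = μ ∧ σ = ν}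

/-- `w*`-compactness (= compactness in the vague topology, these coincide on compact sets). -/
def VCompact {X : Type*} [TopologicalSpace X] [MeasurableSpace X] (R : Set (Measure X)) : Prop :=
  @IsCompact _ (vagueTop X) R

/-- The (topological) support of a measure. -/
def msupp {X : Type*} [TopologicalSpace X] [MeasurableSpace X] (μ : Measure X) : Set X :=
  {x | ∀ U ∈ 𝓝 x, 0 < μ U}

/-- A measure has compact support. -/
def CompactSupp {X : Type*} [TopologicalSpace X] [MeasurableSpace X] (μ : Measure X) : Prop :=
  ∃ K : Set X, IsCompact K ∧ μ Kᶜ = 0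

/-- Frostman's maximum principle. -/
def Frostman {X : Type*} [TopologicalSpace X] [MeasurableSpace X] (k : X → X → ℝ≥0∞) : Prop :=
  ∀ μ : Measure X, μ ∈ MM (Set.univ : Set X) → CompactSupp μ →
    (⨆ x, pot k μ x) = ⨆ x ∈ msupp μ, pot k μ x

/-- An appropriate set of measures. -/
def Appropriate {X : Type*} [TopologicalSpace X] [MeasurableSpace X] (k : X → X → ℝ≥0∞)
    (H : Set X) (R : Set (Measure X)) : Prop :=
  ∀ μ ∈ R, energy k μ μ ≠ ⊤ → ∀ t : ℝ≥0∞,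
    (∀ ν ∈ R, energy k ν ν ≠ ⊤ → (∃ K : Set X, IsCompact K ∧ K ⊆ H ∧ ν Kᶜ = 0) →
      t ≤ energy k ν μ) →
    ∀ᵐ x ∂μ, x ∈ H → t ≤ pot k μ x

/-- `R_n`: the measures of `R` whose support has at most `n` points. -/
def Rn {X : Type*} [TopologicalSpace X] [MeasurableSpace X]
    (R : Set (Measure X)) (n : ℕ) : Set (Measure X) :=
  {μ ∈ R | ∃ s : Finset X, msupp μ ⊆ ↑s ∧ s.card ≤ n}

/-- `R^e_{Φ,g,A}`: probability measures satisfying the moment equality constraints on `A`. -/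
def Re {X Z : Type*} [MeasurableSpace X] (Φ : X → Z → ℝ) (g : Z → ℝ) (A : Set Z) :
    Set (Measure X) :=
  {μ | IsProbabilityMeasure μ ∧ ∀ z ∈ A, ∫ x, Φ x z ∂μ = g z}


section Aux

open MeasureTheory

variable {X Y : Type*} [MeasurableSpace X] [MeasurableSpace Y]

lemma smul_prod_aux (c : ℝ≥0∞) (μ : Measure X) (ν : Measure Y) [SFinite μ] [SFinite ν] :
    (c • μ).prod ν = c • μ.prod ν := by
  ext s hs
  rw [Measure.prod_apply hs, Measure.smul_apply, Measure.prod_apply hs,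
    lintegral_smul_measure, smul_eq_mul]

lemma energy_lin (k : X → Y → ℝ≥0∞) (a b : ℝ≥0∞) (μ ν : Measure X) (τ : Measure Y)
    [SFinite μ] [SFinite ν] [SFinite τ] :
    energy k (a • μ + b • ν) τ = a * energy k μ τ + b * energy k ν τ := by
  unfold energy
  rw [Measure.add_prod, smul_prod_aux, smul_prod_aux, lintegral_add_measure,
    lintegral_smul_measure, lintegral_smul_measure, smul_eq_mul, smul_eq_mul]

end Aux

section Aux2

open MeasureTheory

variable {X : Type*} [TopologicalSpace X] [MeasurableSpace X]

lemma msupp_combo_subset (a b : ℝ≥0∞) (μ ν : Measure X) :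
    msupp (a • μ + b • ν) ⊆ msupp μ ∪ msupp ν := by
  intro x hx
  by_contra hmem
  rw [Set.mem_union] at hmem
  push_neg at hmem
  obtain ⟨hμ, hν⟩ := hmem
  simp only [msupp, Set.mem_setOf_eq, not_forall, not_lt, nonpos_iff_eq_zero] at hμ hν
  obtain ⟨U, hU, hU0⟩ := hμ
  obtain ⟨V, hV, hV0⟩ := hν
  have h := hx (U ∩ V) (Filter.inter_mem hU hV)
  have h1 : μ (U ∩ V) = 0 := measure_mono_null Set.inter_subset_left hU0
  have h2 : ν (U ∩ V) = 0 := measure_mono_null Set.inter_subset_right hV0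
  simp [Measure.add_apply, Measure.smul_apply, h1, h2] at h

end Aux2

/-- subadditivity of the dual Chebyshev constants
`q(R_{m+n}(H), S(L)) ≤ (m/(m+n)) q(R_m(H), S(L)) + (n/(m+n)) q(R_n(H), S(L))`,
hence the sequence of dual Chebyshev constants converges in the extended reals. -/
theorem statement15 {X Y : Type*} [TopologicalSpace X] [MeasurableSpace X] [BorelSpace X]
    [LocallyCompactSpace X] [T2Space X]
    [TopologicalSpace Y] [MeasurableSpace Y] [BorelSpace Y]
    [LocallyCompactSpace Y] [T2Space Y]
    (k : X → Y → ℝ≥0∞) (hk : LowerSemicontinuous fun p : X × Y => k p.1 p.2)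
    (H : Set X) (L : Set Y)
    (R : Set (Measure X)) (S : Set (Measure Y))
    (hR : R ⊆ MM H) (hRconv : ConvexM R) (hS : S ⊆ MM L) :
    (∀ m n : ℕ, 1 ≤ m → 1 ≤ n →
      qup k (Rn R (m + n)) S ≤
        (m : ℝ≥0∞) / ((m : ℝ≥0∞) + (n : ℝ≥0∞)) * qup k (Rn R m) S +
          (n : ℝ≥0∞) / ((m : ℝ≥0∞) + (n : ℝ≥0∞)) * qup k (Rn R n) S) ∧
    ∃ l : ℝ≥0∞, Filter.Tendsto (fun n => qup k (Rn R n) S) Filter.atTop (𝓝 l) := by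
  classical
  constructor
  · intro m n hm hn
    have hm0 : (m : ℝ≥0∞) ≠ 0 := Nat.cast_ne_zero.2 (by omega)
    have hn0 : (n : ℝ≥0∞) ≠ 0 := Nat.cast_ne_zero.2 (by omega)
    have hmn0 : (m : ℝ≥0∞) + (n : ℝ≥0∞) ≠ 0 := by
      simp [add_eq_zero, hm0]
    have hmnt : (m : ℝ≥0∞) + (n : ℝ≥0∞) ≠ ⊤ := by
      simp [ENNReal.add_eq_top]
    set a : ℝ≥0∞ := (m : ℝ≥0∞) / ((m : ℝ≥0∞) + (n : ℝ≥0∞)) with ha_def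
    set b : ℝ≥0∞ := (n : ℝ≥0∞) / ((m : ℝ≥0∞) + (n : ℝ≥0∞)) with hb_def
    have ha0 : a ≠ 0 := by simp [ha_def, ENNReal.div_eq_zero_iff, hm0, hmnt]
    have hb0 : b ≠ 0 := by simp [hb_def, ENNReal.div_eq_zero_iff, hn0, hmnt]
    have hat : a ≠ ⊤ := by
      simp only [ha_def]
      exact (ENNReal.div_lt_top (by simp) hmn0).ne
    have hbt : b ≠ ⊤ := by
      simp only [hb_def]
      exact (ENNReal.div_lt_top (by simp) hmn0).ne
    have hab : a + b = 1 := by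
      rw [ha_def, hb_def, ENNReal.div_add_div_same, ENNReal.div_self hmn0 hmnt]
    have key : ∀ μ ∈ Rn R m, ∀ ν ∈ Rn R n,
        qup k (Rn R (m + n)) S ≤
          a * (⨆ τ ∈ S, energy k μ τ) + b * (⨆ τ ∈ S, energy k ν τ) := by
      intro μ hμ ν hν
      obtain ⟨hμR, s, hμs, hscard⟩ := hμ
      obtain ⟨hνR, t, hνt, htcard⟩ := hν
      have hσR : a • μ + b • ν ∈ R := hRconv μ hμR ν hνR a b hab
      have hσ : a • μ + b • ν ∈ Rn R (m + n) := by
        refine ⟨hσR, s ∪ t, ?_, ?_⟩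
        · refine (msupp_combo_subset a b μ ν).trans ?_
          rw [Finset.coe_union]
          exact Set.union_subset_union hμs hνt
        · exact (Finset.card_union_le s t).trans (by omega)
      haveI : IsFiniteMeasure μ := (hR hμR).1
      haveI : IsFiniteMeasure ν := (hR hνR).1
      calc qup k (Rn R (m + n)) S ≤ ⨆ τ ∈ S, energy k (a • μ + b • ν) τ :=
            iInf₂_le _ hσ
        _ ≤ a * (⨆ τ ∈ S, energy k μ τ) + b * (⨆ τ ∈ S, energy k ν τ) := by
            refine iSup₂_le fun τ hτ => ?_
            haveI : IsFiniteMeasure τ := (hS hτ).1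
            rw [energy_lin]
            exact add_le_add (mul_le_mul_right (le_iSup₂ (f := fun τ _ => energy k μ τ) τ hτ) a)
              (mul_le_mul_right (le_iSup₂ (f := fun τ _ => energy k ν τ) τ hτ) b)
    calc qup k (Rn R (m + n)) S
        ≤ ⨅ μ ∈ Rn R m, ⨅ ν ∈ Rn R n,
            (a * (⨆ τ ∈ S, energy k μ τ) + b * (⨆ τ ∈ S, energy k ν τ)) :=
          le_iInf₂ fun μ hμ => le_iInf₂ fun ν hν => key μ hμ ν hν
      _ = a * qup k (Rn R m) S + b * qup k (Rn R n) S := by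
          unfold qup
          rw [ENNReal.mul_iInf_of_ne ha0 hat, ENNReal.mul_iInf_of_ne hb0 hbt]
          simp_rw [ENNReal.mul_iInf_of_ne ha0 hat, ENNReal.mul_iInf_of_ne hb0 hbt,
            ENNReal.iInf_add, ENNReal.add_iInf]
  · refine ⟨⨅ n, qup k (Rn R n) S, tendsto_atTop_iInf ?_⟩
    intro i j hij
    refine iInf_le_iInf_of_subset ?_
    rintro μ ⟨hμR, s, hs, hcard⟩
    exact ⟨hμR, s, hs, hcard.trans hij⟩

end
end

section
/- Let X and Z be compact metrizable spaces, Φ : X × Z → ℝ and g : Z → ℝ continuous, and k a positive symmetric lower semicontinuous kernel on X × X. Assume R^e_{Φ,g}(X) := {μ ∈ M₁(X) : ∫_X Φ(x,z) dμ(x) = g(z) for all z ∈ Z} is nonempty. Define the cutting-plane sequence: choose any z₁, z₂ ∈ Z and set Z₂ = {z₁, z₂}; given Z_{2n} = {z₁, …, z_{2n}}, let μ_n minimize the energy E(μ) over R^e_{Φ,g,Z_{2n}}(X) := {μ ∈ M₁(X) : ∫_X Φ(x,z) dμ(x) = g(z) for z ∈ Z_{2n}}, set Ψ_n(z) = ∫_X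 Φ(x,z) dμ_n(x) − g(z), and (if Ψ_n is not identically 0) choose z_{2n+1} minimizing Ψ_n on Z and z_{2n+2} maximizing Ψ_n on Z, setting Z_{2n+2} = Z_{2n} ∪ {z_{2n+1}, z_{2n+2}}. Then lim_{n→∞} w(R^e_{Φ,g,Z_{2n}}(X)) = w(R^e_{Φ,g}(X)). -/
open MeasureTheory Topology Filter ENNReal

set_option linter.unusedSectionVars false
set_option maxHeartbeats 1000000

noncomputable section

section CuttingPlaneAux

open TopologicalSpace Set

/-! Auxiliary lemmas for `statement17`. -/

/-- Continuous functions on compact spaces are integrable. -/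
lemma cp_integrable {Y : Type*} [TopologicalSpace Y] [CompactSpace Y] [MeasurableSpace Y]
    [OpensMeasurableSpace Y] (f : C(Y, ℝ)) (ν : Measure Y) [IsFiniteMeasure ν] :
    Integrable (fun x => f x) ν := by
  refine Integrable.mono' (integrable_const ‖f‖) f.continuous.aestronglyMeasurable ?_
  exact Filter.Eventually.of_forall fun x => f.norm_coe_le_norm x

/-- For a probability measure, `|∫ f| ≤ ‖f‖`. -/
lemma cp_abs_integral_le {Y : Type*} [TopologicalSpace Y] [CompactSpace Y] [MeasurableSpace Y]
    [OpensMeasurableSpace Y] (ν : Measure Y) [IsProbabilityMeasure ν] (f : C(Y, ℝ)) :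
    |∫ x, f x ∂ν| ≤ ‖f‖ := by
  have h := norm_integral_le_of_norm_le_const (μ := ν) (f := fun x => f x) (C := ‖f‖)
      (Filter.Eventually.of_forall fun x => f.norm_coe_le_norm x)
  simpa [Real.norm_eq_abs, measure_univ] using h

/-- Diagonal extraction: a uniformly bounded countable family of real sequences admits a
common subsequence along which all of them converge. -/
lemma cp_diag (F : ℕ → ℕ → ℝ) (hb : ∀ i, ∃ C, ∀ n, |F i n| ≤ C) :
    ∃ φ : ℕ → ℕ, StrictMono φ ∧ ∀ i, ∃ l, Filter.Tendsto (fun j => F i (φ j)) atTop (𝓝 l) := by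
  have H : ∀ (i : ℕ) (p : ℕ → ℕ), ∃ θ : ℕ → ℕ, StrictMono θ ∧
      ∃ l : ℝ, Filter.Tendsto (fun j => F i (p (θ j))) atTop (𝓝 l) := by
    intro i p
    obtain ⟨C, hC⟩ := hb i
    have hx : ∀ n, F i (p n) ∈ Set.Icc (-C) C := fun n => abs_le.mp (hC (p n))
    obtain ⟨a, -, θ, hθ, hconv⟩ :=
      tendsto_subseq_of_bounded (Metric.isBounded_Icc (-C) C) hx
    exact ⟨θ, hθ, a, hconv⟩
  choose θ hθmono hθconv using H
  let ψ : ℕ → (ℕ → ℕ) := fun i => Nat.rec (θ 0 id) (fun i prev => prev ∘ θ (i + 1) prev) i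
  have hψs : ∀ i, ψ (i + 1) = ψ i ∘ θ (i + 1) (ψ i) := fun _ => rfl
  have hψmono : ∀ i, StrictMono (ψ i) := by
    intro i; induction i with
    | zero => exact hθmono 0 id
    | succ i ih => exact ih.comp (hθmono (i + 1) (ψ i))
  have hψconv : ∀ i, ∃ l, Filter.Tendsto (fun j => F i (ψ i j)) atTop (𝓝 l) := by
    intro i; cases i with
    | zero =>
      obtain ⟨l, hl⟩ := hθconv 0 id
      exact ⟨l, hl⟩
    | succ i =>
      obtain ⟨l, hl⟩ := hθconv (i + 1) (ψ i)
      exact ⟨l, hl⟩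
  have hsub : ∀ j i, i ≤ j → ∀ a, ∃ n, a ≤ n ∧ ψ j a = ψ i n := by
    intro j
    induction j with
    | zero =>
      intro i hi a
      obtain rfl := Nat.le_zero.mp hi
      exact ⟨a, le_rfl, rfl⟩
    | succ j ih =>
      intro i hi a
      rcases Nat.eq_or_lt_of_le hi with rfl | hlt
      · exact ⟨a, le_rfl, rfl⟩
      · have hij : i ≤ j := Nat.lt_succ_iff.mp hlt
        obtain ⟨n, hn, he⟩ := ih i hij (θ (j + 1) (ψ j) a)
        exact ⟨n, le_trans (hθmono (j + 1) (ψ j)).le_apply hn, he⟩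
  refine ⟨fun j => ψ j j, ?_, ?_⟩
  · apply strictMono_nat_of_lt_succ
    intro j
    have h1 : j < θ (j + 1) (ψ j) (j + 1) :=
      lt_of_lt_of_le (Nat.lt_succ_self j) (hθmono (j + 1) (ψ j)).le_apply
    exact (hψmono j) h1
  · intro i
    obtain ⟨l, hl⟩ := hψconv i
    refine ⟨l, Metric.tendsto_atTop.mpr ?_⟩
    intro ε hε
    obtain ⟨N, hN⟩ := Metric.tendsto_atTop.mp hl ε hε
    refine ⟨max i N, fun j hj => ?_⟩
    obtain ⟨n, hn, he⟩ := hsub j i (le_trans (le_max_left _ _) hj) j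
    show dist (F i (ψ j j)) l < ε
    rw [he]
    exact hN n (le_trans (le_trans (le_max_right _ _) hj) hn)

variable {X : Type*} [TopologicalSpace X] [CompactSpace X] [MetrizableSpace X]
  [MeasurableSpace X] [BorelSpace X]

/-- The Riesz–Markov–Kakutani representation theorem for positive normalized linear
functionals on `C(X, ℝ)`, `X` compact metrizable. -/
lemma cp_rmk (L : C(X, ℝ) → ℝ)
    (hadd : ∀ f g : C(X, ℝ), L (f + g) = L f + L g)
    (hsmul : ∀ (c : ℝ) (f : C(X, ℝ)), L (c • f) = c * L f)
    (hpos : ∀ f : C(X, ℝ), (∀ x, 0 ≤ f x) → 0 ≤ L f)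
    (hone : L 1 = 1) :
    ∃ μ : Measure X, IsProbabilityMeasure μ ∧ ∀ f : C(X, ℝ), ∫ x, f x ∂μ = L f := by
  letI : MetricSpace X := TopologicalSpace.metrizableSpaceMetric X
  -- basic properties of `L`
  have hzero : L 0 = 0 := by
    have := hsmul 0 0
    simpa using this
  have hmono : ∀ f g : C(X, ℝ), (∀ x, f x ≤ g x) → L f ≤ L g := by
    intro f g hfg
    have hdecomp : g = f + (g - f) := by ext x; simp
    have : L g = L f + L (g - f) := by rw [hdecomp] at *; rw [hadd]; simp
    rw [this]
    have : 0 ≤ L (g - f) := hpos _ (fun x => by simp [sub_nonneg]; exact hfg x)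
    linarith
  -- the test class and real-valued content
  set A : Set X → Set C(X, ℝ) :=
    fun K => {f | (∀ x, 0 ≤ f x) ∧ ∀ x ∈ K, 1 ≤ f x} with hA
  set cR : Set X → ℝ := fun K => sInf (L '' A K) with hcR
  have hA1 : ∀ K : Set X, (1 : C(X, ℝ)) ∈ A K := by
    intro K
    constructor
    · intro x; simp
    · intro x _; simp
  have hAne : ∀ K : Set X, (L '' A K).Nonempty := fun K => ⟨L 1, 1, hA1 K, rfl⟩
  have hAbdd : ∀ K : Set X, BddBelow (L '' A K) := by
    intro K
    refine ⟨0, ?_⟩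
    rintro v ⟨f, hf, rfl⟩
    exact hpos f hf.1
  have hcR_nonneg : ∀ K : Set X, 0 ≤ cR K := by
    intro K
    apply le_csInf (hAne K)
    rintro v ⟨f, hf, rfl⟩
    exact hpos f hf.1
  have hcR_le : ∀ (K : Set X) (f : C(X, ℝ)), f ∈ A K → cR K ≤ L f :=
    fun K f hf => csInf_le (hAbdd K) ⟨f, hf, rfl⟩
  have hcR_mono : ∀ K K' : Set X, K ⊆ K' → cR K ≤ cR K' := by
    intro K K' hKK'
    apply csInf_le_csInf (hAbdd K) (hAne K')
    rintro v ⟨f, hf, rfl⟩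
    exact ⟨f, ⟨hf.1, fun x hx => hf.2 x (hKK' hx)⟩, rfl⟩
  have hcR_univ : cR Set.univ = 1 := by
    apply le_antisymm
    · have := hcR_le Set.univ 1 (hA1 _)
      rwa [hone] at this
    · apply le_csInf (hAne _)
      rintro v ⟨f, hf, rfl⟩
      have : L 1 ≤ L f := hmono _ _ (fun x => by simpa using hf.2 x (Set.mem_univ x))
      rwa [hone] at this
  have hcR_sub : ∀ K₁ K₂ : Set X, cR (K₁ ∪ K₂) ≤ cR K₁ + cR K₂ := by
    intro K₁ K₂
    apply _root_.le_of_forall_pos_le_add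
    intro ε hε
    obtain ⟨v₁, ⟨f₁, hf₁, rfl⟩, hv₁⟩ := Real.lt_sInf_add_pos (hAne K₁) (half_pos hε)
    obtain ⟨v₂, ⟨f₂, hf₂, rfl⟩, hv₂⟩ := Real.lt_sInf_add_pos (hAne K₂) (half_pos hε)
    have hmem : f₁ + f₂ ∈ A (K₁ ∪ K₂) := by
      constructor
      · intro x; have := hf₁.1 x; have := hf₂.1 x; simp only [ContinuousMap.add_apply]; linarith
      · rintro x (hx | hx)
        · have h1 := hf₁.2 x hx; have h2 := hf₂.1 x
          simp only [ContinuousMap.add_apply]; linarith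
        · have h1 := hf₂.2 x hx; have h2 := hf₁.1 x
          simp only [ContinuousMap.add_apply]; linarith
    have := hcR_le _ _ hmem
    rw [hadd] at this
    calc cR (K₁ ∪ K₂) ≤ L f₁ + L f₂ := this
      _ ≤ (cR K₁ + ε / 2) + (cR K₂ + ε / 2) := by
          change L f₁ < sInf (L '' A K₁) + ε / 2 at hv₁
          change L f₂ < sInf (L '' A K₂) + ε / 2 at hv₂
          rw [hcR]; push_cast; linarith
      _ = cR K₁ + cR K₂ + ε := by ring
  have hcR_disj : ∀ K₁ K₂ : Set X, IsClosed K₁ → IsClosed K₂ → Disjoint K₁ K₂ →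
      cR K₁ + cR K₂ ≤ cR (K₁ ∪ K₂) := by
    intro K₁ K₂ hK₁ hK₂ hdis
    obtain ⟨q, hq0, hq1, hq01⟩ := exists_continuous_zero_one_of_isClosed hK₂ hK₁ hdis.symm
    -- `q = 0` on `K₂`, `q = 1` on `K₁`
    apply le_csInf (hAne _)
    rintro v ⟨f, hf, rfl⟩
    have hm1 : f * q ∈ A K₁ := by
      constructor
      · intro x
        have := hf.1 x; have := (hq01 x).1
        simp only [ContinuousMap.mul_apply]
        positivity
      · intro x hx
        have h1 : q x = 1 := hq1 hx
        have h2 : 1 ≤ f x := hf.2 x (Or.inl hx)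
        simp only [ContinuousMap.mul_apply, h1, mul_one]
        exact h2
    have hm2 : f * (1 - q) ∈ A K₂ := by
      constructor
      · intro x
        have := hf.1 x; have := (hq01 x).2
        simp only [ContinuousMap.mul_apply, ContinuousMap.sub_apply, ContinuousMap.one_apply]
        nlinarith
      · intro x hx
        have h1 : q x = 0 := hq0 hx
        have h2 : 1 ≤ f x := hf.2 x (Or.inr hx)
        simp only [ContinuousMap.mul_apply, ContinuousMap.sub_apply, ContinuousMap.one_apply, h1]
        linarith
    have hsplit : f * q + f * (1 - q) = f := by ext x; simp; ring
    calc cR K₁ + cR K₂ ≤ L (f * q) + L (f * (1 - q)) :=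
          add_le_add (hcR_le _ _ hm1) (hcR_le _ _ hm2)
      _ = L (f * q + f * (1 - q)) := (hadd _ _).symm
      _ = L f := by rw [hsplit]
  -- the content
  set c : Content X :=
    { toFun := fun K => Real.toNNReal (cR K)
      mono' := fun K₁ K₂ h => Real.toNNReal_mono (hcR_mono _ _ h)
      sup_disjoint' := by
        intro K₁ K₂ hdis hcl₁ hcl₂
        show Real.toNNReal (cR ((K₁ ⊔ K₂ : Compacts X) : Set X)) =
          Real.toNNReal (cR (K₁ : Set X)) + Real.toNNReal (cR (K₂ : Set X))
        have hthis : cR ((K₁ ⊔ K₂ : Compacts X) : Set X) = cR (K₁ : Set X) + cR (K₂ : Set X) := by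
          have hco : ((K₁ ⊔ K₂ : Compacts X) : Set X) = (K₁ : Set X) ∪ K₂ := rfl
          rw [hco]
          exact le_antisymm (hcR_sub _ _) (hcR_disj _ _ hcl₁ hcl₂ hdis)
        rw [hthis, Real.toNNReal_add (hcR_nonneg _) (hcR_nonneg _)]
      sup_le' := by
        intro K₁ K₂
        show Real.toNNReal (cR ((K₁ ⊔ K₂ : Compacts X) : Set X)) ≤
          Real.toNNReal (cR (K₁ : Set X)) + Real.toNNReal (cR (K₂ : Set X))
        have hco : ((K₁ ⊔ K₂ : Compacts X) : Set X) = (K₁ : Set X) ∪ K₂ := rfl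
        rw [hco]
        calc Real.toNNReal (cR ((K₁ : Set X) ∪ K₂)) ≤ Real.toNNReal (cR K₁ + cR K₂) :=
              Real.toNNReal_mono (hcR_sub _ _)
          _ = Real.toNNReal (cR K₁) + Real.toNNReal (cR K₂) :=
              Real.toNNReal_add (hcR_nonneg _) (hcR_nonneg _) } with hc
  have hc_apply : ∀ K : Compacts X, (c K : ℝ≥0∞) = ENNReal.ofReal (cR K) := by
    intro K
    rfl
  set μ : Measure X := c.measure with hμdef
  -- the measure of the whole space
  have hμuniv : μ Set.univ = 1 := by
    have h1 : μ Set.univ = c.outerMeasure Set.univ := c.measure_apply MeasurableSet.univ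
    have h2 : c.outerMeasure Set.univ = c.innerContent ⟨Set.univ, isOpen_univ⟩ :=
      c.outerMeasure_of_isOpen Set.univ isOpen_univ
    have h3 : c.innerContent ⟨Set.univ, isOpen_univ⟩ = c ⟨Set.univ, isCompact_univ⟩ :=
      c.innerContent_of_isCompact isCompact_univ isOpen_univ
    rw [h1, h2, h3, hc_apply]
    show ENNReal.ofReal (cR Set.univ) = 1
    rw [hcR_univ]
    simp
  haveI hμprob : IsProbabilityMeasure μ := ⟨hμuniv⟩
  have hμapp : ∀ s : Set X, MeasurableSet s → μ s = c.outerMeasure s :=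
    fun _ hs => c.measure_apply hs
  clear hμdef
  clear_value μ
  -- the key inequality : `L f ≤ ∫ f dμ`
  have key : ∀ f : C(X, ℝ), L f ≤ ∫ x, f x ∂μ := by
    intro f
    have main : ∀ ε : ℝ, 0 < ε → ε ≤ 1 → L f ≤ (∫ x, f x ∂μ) + ε * (2 * ‖f‖ + 7) := by
      intro ε hε hε1
      set c0 : ℝ := ‖f‖ + 1 with hc0
      have hc0pos : 0 < c0 := by positivity
      set n : ℕ := max 1 ⌈(2 * c0) / ε⌉₊ with hn
      have hn1 : 1 ≤ n := le_max_left _ _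
      have hnpos : (0 : ℝ) < n := by exact_mod_cast hn1
      have hnceil : (2 * c0) / ε ≤ n := by
        calc (2 * c0) / ε ≤ (⌈(2 * c0) / ε⌉₊ : ℝ) := Nat.le_ceil _
          _ ≤ n := by exact_mod_cast le_max_right _ _
      set δ : ℝ := 2 * c0 / n with hδ
      have hδpos : 0 < δ := by positivity
      have hδε : δ ≤ ε := by
        rw [hδ, div_le_iff₀ hnpos]
        calc 2 * c0 = ((2 * c0) / ε) * ε := by field_simp
          _ ≤ (n : ℝ) * ε := by nlinarith
          _ = ε * n := by ring
      set y : ℕ → ℝ := fun i => -c0 + i * δ with hy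
      have hy_mono : ∀ i j : ℕ, i ≤ j → y i ≤ y j := by
        intro i j hij
        simp only [hy]
        have : (i : ℝ) ≤ j := by exact_mod_cast hij
        nlinarith
      have hy0 : y 0 = -c0 := by simp [hy]
      have hyn : y n = c0 := by
        simp only [hy, hδ]
        field_simp
        ring
      have hflt : ∀ x, y 0 < f x := by
        intro x
        have h1 : ‖f x‖ ≤ ‖f‖ := f.norm_coe_le_norm x
        rw [Real.norm_eq_abs] at h1
        have := abs_le.mp h1
        rw [hy0, hc0]
        linarith [this.1]
      have hfle : ∀ x, f x ≤ y n := by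
        intro x
        have h1 : ‖f x‖ ≤ ‖f‖ := f.norm_coe_le_norm x
        rw [Real.norm_eq_abs] at h1
        have := abs_le.mp h1
        rw [hyn, hc0]
        linarith [this.2]
      set E : Fin n → Set X := fun i => f ⁻¹' (Set.Ioc (y i) (y ((i : ℕ) + 1))) with hE
      have hEmeas : ∀ i, MeasurableSet (E i) :=
        fun i => f.continuous.measurable measurableSet_Ioc
      -- the index of the unique slab containing `x`
      have hex : ∀ x : X, ∃ i : ℕ, f x ≤ y (i + 1) := by
        intro x
        refine ⟨n - 1, ?_⟩
        have : n - 1 + 1 = n := Nat.succ_pred_eq_of_pos hn1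
        rw [this]
        exact hfle x
      set i₀ : X → ℕ := fun x => Nat.find (hex x) with hi₀
      have hi₀lt : ∀ x, i₀ x < n := by
        intro x
        have h1 : i₀ x ≤ n - 1 := Nat.find_le (by
          have : n - 1 + 1 = n := Nat.succ_pred_eq_of_pos hn1
          rw [this]; exact hfle x)
        omega
      have hi₀mem : ∀ x, x ∈ E ⟨i₀ x, hi₀lt x⟩ := by
        intro x
        constructor
        · -- `y (i₀ x) < f x`
          rcases Nat.eq_zero_or_pos (i₀ x) with h0 | hposn
          · show y (i₀ x) < f x
            rw [h0]
            exact hflt x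
          · show y (i₀ x) < f x
            obtain ⟨m, hm⟩ := Nat.exists_eq_succ_of_ne_zero (Nat.pos_iff_ne_zero.mp hposn)
            have hmlt : m < i₀ x := by omega
            have := Nat.find_min (hex x) hmlt
            push_neg at this
            rw [hm]
            exact this
        · exact Nat.find_spec (hex x)
      have hEuniq : ∀ (x : X) (j : Fin n), x ∈ E j → (j : ℕ) = i₀ x := by
        intro x j hxj
        obtain ⟨hj1, hj2⟩ := hxj
        have hmem := hi₀mem x
        obtain ⟨hi1, hi2⟩ := hmem
        by_contra hne
        rcases Nat.lt_or_ge (j : ℕ) (i₀ x) with hlt | hge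
        · have : f x ≤ y (i₀ x) := le_trans hj2 (hy_mono _ _ (Nat.succ_le_of_lt hlt))
          exact absurd this (not_le.mpr hi1)
        · have hgt : i₀ x < (j : ℕ) := lt_of_le_of_ne hge (fun h => hne h.symm)
          have : f x ≤ y (j : ℕ) := le_trans hi2 (hy_mono _ _ (Nat.succ_le_of_lt hgt))
          exact absurd this (not_le.mpr hj1)
      have hdisj : ((Finset.univ : Finset (Fin n)) : Set (Fin n)).PairwiseDisjoint E := by
        intro i _ j _ hij
        refine Set.disjoint_left.mpr fun {x} hxi hxj => hij ?_
        apply Fin.ext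
        rw [hEuniq x i hxi, hEuniq x j hxj]
      have hcoverE : ⋃ i ∈ (Finset.univ : Finset (Fin n)), E i = Set.univ := by
        apply Set.eq_univ_of_forall
        intro x
        exact Set.mem_biUnion (Finset.mem_univ _) (hi₀mem x)
      have hsum_meas : ∑ i : Fin n, μ (E i) = 1 := by
        rw [← measure_biUnion_finset hdisj (fun i _ => hEmeas i), hcoverE, hμuniv]
      set m' : Fin n → ℝ := fun i => (μ (E i)).toReal with hm'
      have hm'_nn : ∀ i, 0 ≤ m' i := fun i => ENNReal.toReal_nonneg
      have hm'_sum : ∑ i : Fin n, m' i = 1 := by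
        have := congrArg ENNReal.toReal hsum_meas
        rwa [ENNReal.toReal_sum (fun i _ => measure_ne_top μ _), ENNReal.toReal_one] at this
      -- choose approximating open sets
      have hUex : ∀ i : Fin n, ∃ U : Set X, ∃ hU : IsOpen U, E i ⊆ U ∧
          c.innerContent ⟨U, hU⟩ ≤ μ (E i) + ENNReal.ofReal (ε / n) := by
        intro i
        have hfin : μ (E i) ≠ ⊤ := measure_ne_top μ _
        have hlt : μ (E i) < μ (E i) + ENNReal.ofReal (ε / n) := by
          apply ENNReal.lt_add_right hfin
          simp only [ne_eq, ENNReal.ofReal_eq_zero, not_le]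
          positivity
        have heq : μ (E i) = c.outerMeasure (E i) := hμapp _ (hEmeas i)
        nth_rewrite 1 [heq] at hlt
        rw [Content.outerMeasure_eq_iInf] at hlt
        simp only [iInf_lt_iff] at hlt
        obtain ⟨U, hU, hEU, hfin'⟩ := hlt
        exact ⟨U, hU, hEU, hfin'.le⟩
      choose U hUopen hEU hUinner using hUex
      set V : Fin n → Set X := fun i => U i ∩ f ⁻¹' (Set.Iio (y ((i : ℕ) + 1) + ε)) with hV
      have hVopen : ∀ i, IsOpen (V i) :=
        fun i => (hUopen i).inter (isOpen_Iio.preimage f.continuous)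
      have hVcover : (Set.univ : Set X) ⊆ ⋃ i, V i := by
        intro x _
        refine Set.mem_iUnion.mpr ⟨⟨i₀ x, hi₀lt x⟩, ?_⟩
        constructor
        · exact hEU _ (hi₀mem x)
        · have := (hi₀mem x).2
          show f x < y (i₀ x + 1) + ε
          linarith
      obtain ⟨h, hsupp, hsum1, h01, -⟩ :=
        exists_continuous_sum_one_of_isOpen_isCompact hVopen isCompact_univ hVcover
      -- additivity of `L` on finite sums
      have hLsum : ∀ (s : Finset (Fin n)) (F : Fin n → C(X, ℝ)),
          L (∑ i ∈ s, F i) = ∑ i ∈ s, L (F i) := by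
        intro s
        induction s using Finset.induction_on with
        | empty => intro F; simpa using hzero
        | insert _ _ hni ih =>
          intro F
          rw [Finset.sum_insert hni, hadd, ih, Finset.sum_insert hni]
      set w' : Fin n → ℝ := fun i => L (h i) with hw'
      have hw'_nn : ∀ i, 0 ≤ w' i := fun i => hpos _ (fun x => (h01 i x).1)
      have hsum_cm : (∑ i : Fin n, h i) = (1 : C(X, ℝ)) := by
        apply ContinuousMap.ext
        intro x
        have := hsum1 (Set.mem_univ x)
        simpa using this
      have hw'_sum : ∑ i : Fin n, w' i = 1 := by
        rw [hw', ← hLsum, hsum_cm, hone]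
      -- each `w' i` is bounded by `m' i + ε/n`
      have hwle : ∀ i, w' i ≤ m' i + ε / n := by
        intro i
        set K : Set X := tsupport (h i) with hK
        have hKc : IsCompact K := (isClosed_tsupport _).isCompact
        have hKV : K ⊆ V i := hsupp i
        have h1 : L (h i) ≤ cR K := by
          apply le_csInf (hAne K)
          rintro v ⟨q, ⟨hq0, hq1⟩, rfl⟩
          apply hmono
          intro x
          by_cases hx : x ∈ K
          · exact le_trans (h01 i x).2 (hq1 x hx)
          · rw [image_eq_zero_of_notMem_tsupport hx]
            exact hq0 x
        have h2 : ENNReal.ofReal (cR K) ≤ μ (E i) + ENNReal.ofReal (ε / n) := by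
          have ha : ENNReal.ofReal (cR K) = (c ⟨K, hKc⟩ : ℝ≥0∞) := (hc_apply ⟨K, hKc⟩).symm
          rw [ha]
          calc (c ⟨K, hKc⟩ : ℝ≥0∞) ≤ c.innerContent ⟨V i, hVopen i⟩ :=
                c.le_innerContent ⟨K, hKc⟩ ⟨V i, hVopen i⟩ hKV
            _ ≤ c.innerContent ⟨U i, hUopen i⟩ :=
                c.innerContent_mono (hVopen i) (hUopen i) Set.inter_subset_left
            _ ≤ μ (E i) + ENNReal.ofReal (ε / n) := hUinner i
        have h3 : ENNReal.ofReal (L (h i)) ≤ μ (E i) + ENNReal.ofReal (ε / n) :=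
          le_trans (ENNReal.ofReal_le_ofReal h1) h2
        have h4 : (ENNReal.ofReal (L (h i))).toReal ≤
            (μ (E i) + ENNReal.ofReal (ε / n)).toReal := by
          apply ENNReal.toReal_mono _ h3
          exact ENNReal.add_ne_top.mpr ⟨measure_ne_top μ _, ENNReal.ofReal_ne_top⟩
        rw [ENNReal.toReal_ofReal (hw'_nn i), ENNReal.toReal_add (measure_ne_top μ _)
          ENNReal.ofReal_ne_top, ENNReal.toReal_ofReal (by positivity : (0:ℝ) ≤ ε / n)] at h4
        exact h4
      -- pointwise product bound
      have hprodb : ∀ i : Fin n, L (h i * f) ≤ (y ((i : ℕ) + 1) + ε) * w' i := by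
        intro i
        have hpt : ∀ x, (h i * f) x ≤ ((y ((i : ℕ) + 1) + ε) • h i) x := by
          intro x
          simp only [ContinuousMap.mul_apply, ContinuousMap.smul_apply, smul_eq_mul]
          by_cases hx : x ∈ tsupport (h i)
          · have hxV : x ∈ V i := hsupp i hx
            have hfx : f x < y ((i : ℕ) + 1) + ε := hxV.2
            have hh := (h01 i x).1
            nlinarith
          · rw [image_eq_zero_of_notMem_tsupport hx]
            simp
        calc L (h i * f) ≤ L ((y ((i : ℕ) + 1) + ε) • h i) := hmono _ _ hpt
          _ = (y ((i : ℕ) + 1) + ε) * w' i := hsmul _ _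
      -- decomposition of `f`
      have hfdecomp : L f = ∑ i : Fin n, L (h i * f) := by
        rw [← hLsum]
        congr 1
        apply ContinuousMap.ext
        intro x
        simp only [ContinuousMap.coe_sum, Finset.sum_apply, ContinuousMap.mul_apply]
        rw [← Finset.sum_mul]
        have : (∑ i : Fin n, h i x) = 1 := by
          have := congrArg (fun q : C(X, ℝ) => q x) hsum_cm
          simpa using this
        rw [this, one_mul]
      -- step function lower bound for the integral
      have hstep : ∑ i : Fin n, y (i : ℕ) * m' i ≤ ∫ x, f x ∂μ := by
        set s : X → ℝ := fun x => ∑ i : Fin n, (E i).indicator (fun _ => y (i : ℕ)) x with hs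
        have hs_int : Integrable s μ :=
          integrable_finset_sum _ fun i _ => (integrable_const _).indicator (hEmeas i)
        have hs_val : ∫ x, s x ∂μ = ∑ i : Fin n, y (i : ℕ) * m' i := by
          simp only [hs]
          rw [integral_finset_sum _ (fun i _ => (integrable_const _).indicator (hEmeas i))]
          refine Finset.sum_congr rfl fun i _ => ?_
          rw [integral_indicator_const _ (hEmeas i)]
          simp [hm', mul_comm, measureReal_def]
        have hs_le : ∀ x, s x ≤ f x := by
          intro x
          have hmem : x ∈ E ⟨i₀ x, hi₀lt x⟩ := hi₀mem x
          have hval : s x = y (i₀ x) := by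
            simp only [hs]
            rw [Finset.sum_eq_single (⟨i₀ x, hi₀lt x⟩ : Fin n)]
            · simp [Set.indicator_of_mem hmem]
            · intro j _ hj
              apply Set.indicator_of_notMem
              intro hxj
              exact hj (by
                apply Fin.ext
                simp [hEuniq x j hxj])
            · intro habs
              exact absurd (Finset.mem_univ _) habs
          rw [hval]
          exact le_of_lt hmem.1
        rw [← hs_val]
        exact integral_mono hs_int (cp_integrable f μ) hs_le
      -- the big chain of inequalities
      have hq_nn : ∀ i : Fin n, 0 ≤ y ((i : ℕ) + 1) + ε + c0 := by
        intro i
        have h1 : y ((i : ℕ) + 1) + c0 = (((i : ℕ) : ℝ) + 1) * δ := by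
          simp only [hy]; push_cast; ring
        have h2 : (0 : ℝ) ≤ (((i : ℕ) : ℝ) + 1) * δ := by positivity
        linarith
      have hq_le : ∀ i : Fin n, y ((i : ℕ) + 1) + ε + c0 ≤ 2 * c0 + ε := by
        intro i
        have h1 : y ((i : ℕ) + 1) ≤ y n := hy_mono _ _ (by omega)
        rw [hyn] at h1
        linarith
      have hchain1 : L f ≤ ∑ i : Fin n, (y ((i : ℕ) + 1) + ε) * w' i := by
        rw [hfdecomp]
        exact Finset.sum_le_sum fun i _ => hprodb i
      have hchain2 : ∑ i : Fin n, (y ((i : ℕ) + 1) + ε) * w' i =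
          (∑ i : Fin n, (y ((i : ℕ) + 1) + ε + c0) * w' i) - c0 := by
        have hexp : ∑ i : Fin n, (y ((i : ℕ) + 1) + ε + c0) * w' i
            = ∑ i : Fin n, ((y ((i : ℕ) + 1) + ε) * w' i + c0 * w' i) := by
          apply Finset.sum_congr rfl
          intro i _
          ring
        rw [hexp, Finset.sum_add_distrib, ← Finset.mul_sum, hw'_sum, mul_one]
        ring
      have hchain3 : (∑ i : Fin n, (y ((i : ℕ) + 1) + ε + c0) * w' i) ≤
          ∑ i : Fin n, (y ((i : ℕ) + 1) + ε + c0) * (m' i + ε / n) := by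
        apply Finset.sum_le_sum
        intro i _
        exact mul_le_mul_of_nonneg_left (hwle i) (hq_nn i)
      have hchain4 : ∑ i : Fin n, (y ((i : ℕ) + 1) + ε + c0) * (m' i + ε / n) =
          (∑ i : Fin n, (y ((i : ℕ) + 1) + ε + c0) * m' i) +
          (∑ i : Fin n, (y ((i : ℕ) + 1) + ε + c0)) * (ε / n) := by
        rw [Finset.sum_mul, ← Finset.sum_add_distrib]
        apply Finset.sum_congr rfl
        intro i _
        ring
      have hchain5 : (∑ i : Fin n, (y ((i : ℕ) + 1) + ε + c0)) * (ε / n) ≤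
          (2 * c0 + ε) * ε := by
        have h1 : (∑ i : Fin n, (y ((i : ℕ) + 1) + ε + c0)) ≤ (n : ℝ) * (2 * c0 + ε) := by
          calc (∑ i : Fin n, (y ((i : ℕ) + 1) + ε + c0)) ≤
              ∑ _i : Fin n, (2 * c0 + ε) := Finset.sum_le_sum fun i _ => hq_le i
            _ = (n : ℝ) * (2 * c0 + ε) := by
                rw [Finset.sum_const, Finset.card_univ, Fintype.card_fin, nsmul_eq_mul]
          
        have h2 : 0 ≤ ε / n := by positivity
        calc (∑ i : Fin n, (y ((i : ℕ) + 1) + ε + c0)) * (ε / n) ≤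
            ((n : ℝ) * (2 * c0 + ε)) * (ε / n) := by
              apply mul_le_mul_of_nonneg_right h1 h2
          _ = (2 * c0 + ε) * ε := by field_simp
      have hchain6 : ∑ i : Fin n, (y ((i : ℕ) + 1) + ε + c0) * m' i =
          (∑ i : Fin n, y ((i : ℕ) + 1) * m' i) + (ε + c0) := by
        have : ∑ i : Fin n, (y ((i : ℕ) + 1) + ε + c0) * m' i =
            (∑ i : Fin n, y ((i : ℕ) + 1) * m' i) + (ε + c0) * ∑ i : Fin n, m' i := by
          rw [Finset.mul_sum, ← Finset.sum_add_distrib]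
          apply Finset.sum_congr rfl
          intro i _
          ring
        rw [this, hm'_sum, mul_one]
      have hchain7 : ∑ i : Fin n, y ((i : ℕ) + 1) * m' i =
          (∑ i : Fin n, y (i : ℕ) * m' i) + δ := by
        have hy1 : ∀ i : Fin n, y ((i : ℕ) + 1) = y (i : ℕ) + δ := by
          intro i
          simp only [hy]
          push_cast
          ring
        have : ∑ i : Fin n, y ((i : ℕ) + 1) * m' i =
            (∑ i : Fin n, y (i : ℕ) * m' i) + δ * ∑ i : Fin n, m' i := by
          rw [Finset.mul_sum, ← Finset.sum_add_distrib]
          apply Finset.sum_congr rfl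
          intro i _
          rw [hy1 i]
          ring
        rw [this, hm'_sum, mul_one]
      -- put everything together
      have hint : ∑ i : Fin n, y (i : ℕ) * m' i ≤ ∫ x, f x ∂μ := hstep
      have : L f ≤ (∫ x, f x ∂μ) + δ + (ε + c0) + (2 * c0 + ε) * ε - c0 := by
        calc L f ≤ ∑ i : Fin n, (y ((i : ℕ) + 1) + ε) * w' i := hchain1
          _ = (∑ i : Fin n, (y ((i : ℕ) + 1) + ε + c0) * w' i) - c0 := hchain2
          _ ≤ (∑ i : Fin n, (y ((i : ℕ) + 1) + ε + c0) * (m' i + ε / n)) - c0 := by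
              linarith [hchain3]
          _ = ((∑ i : Fin n, (y ((i : ℕ) + 1) + ε + c0) * m' i) +
              (∑ i : Fin n, (y ((i : ℕ) + 1) + ε + c0)) * (ε / n)) - c0 := by rw [hchain4]
          _ ≤ ((∑ i : Fin n, (y ((i : ℕ) + 1) + ε + c0) * m' i) + (2 * c0 + ε) * ε) - c0 := by
              linarith [hchain5]
          _ = (((∑ i : Fin n, y (i : ℕ) * m' i) + δ) + (ε + c0) + (2 * c0 + ε) * ε) - c0 := by
              rw [hchain6, hchain7]
          _ ≤ (∫ x, f x ∂μ) + δ + (ε + c0) + (2 * c0 + ε) * ε - c0 := by linarith [hint]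
      have hfin : δ + ε + (2 * c0 + ε) * ε ≤ ε * (2 * ‖f‖ + 7) := by
        have hnf : (0 : ℝ) ≤ ‖f‖ := norm_nonneg f
        have hεε : ε * ε ≤ ε * 1 := mul_le_mul_of_nonneg_left hε1 hε.le
        have hc0' : c0 = ‖f‖ + 1 := hc0
        nlinarith [hδε, hεε, hnf, hε.le]
      linarith
    -- conclude from `main`
    apply _root_.le_of_forall_pos_le_add
    intro δ' hδ'
    set C : ℝ := 2 * ‖f‖ + 7 with hC
    have hCpos : 0 < C := by positivity
    set ε : ℝ := min 1 (δ' / C) with hε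
    have hεpos : 0 < ε := lt_min one_pos (by positivity)
    have hε1 : ε ≤ 1 := min_le_left _ _
    have := main ε hεpos hε1
    have hεC : ε * C ≤ δ' := by
      have h1 : ε ≤ δ' / C := min_le_right _ _
      calc ε * C ≤ (δ' / C) * C := mul_le_mul_of_nonneg_right h1 hCpos.le
        _ = δ' := by field_simp
    linarith
  -- assemble the result
  refine ⟨μ, hμprob, fun f => ?_⟩
  have h1 : L f ≤ ∫ x, f x ∂μ := key f
  have h2 : L (-f) ≤ ∫ x, (-f) x ∂μ := key (-f)
  have h3 : L (-f) = -L f := by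
    have := hsmul (-1) f
    simpa using this
  have h4 : ∫ x, (-f) x ∂μ = -∫ x, f x ∂μ := by
    simp only [ContinuousMap.neg_apply]
    exact integral_neg _
  rw [h3, h4] at h2
  linarith

/-- Sequential weak-* compactness of probability measures on a compact metrizable space. -/
lemma cp_exists_subseq (μs : ℕ → Measure X) (hμs : ∀ n, IsProbabilityMeasure (μs n)) :
    ∃ (φ : ℕ → ℕ) (μ : Measure X), StrictMono φ ∧ IsProbabilityMeasure μ ∧
      ∀ f : C(X, ℝ), Filter.Tendsto (fun j => ∫ x, f x ∂(μs (φ j))) atTop (𝓝 (∫ x, f x ∂μ)) := by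
  letI : MetricSpace X := TopologicalSpace.metrizableSpaceMetric X
  obtain ⟨u, hu⟩ := TopologicalSpace.exists_dense_seq C(X, ℝ)
  obtain ⟨φ, hφ, hconv⟩ := cp_diag (fun i j => ∫ x, u i x ∂(μs j)) (fun i =>
    ⟨‖u i‖, fun j => by
      haveI := hμs j
      exact cp_abs_integral_le (μs j) (u i)⟩)
  have key : ∀ f : C(X, ℝ), ∃ l,
      Filter.Tendsto (fun j => ∫ x, f x ∂(μs (φ j))) atTop (𝓝 l) := by
    intro f
    apply cauchySeq_tendsto_of_complete
    rw [Metric.cauchySeq_iff]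
    intro ε hε
    obtain ⟨i, hi⟩ := Metric.denseRange_iff.mp hu f (ε / 4) (by linarith)
    obtain ⟨l, hl⟩ := hconv i
    obtain ⟨N, hN⟩ := Metric.cauchySeq_iff.mp hl.cauchySeq (ε / 4) (by linarith)
    have hfd : ∀ j, dist (∫ x, f x ∂(μs (φ j))) (∫ x, u i x ∂(μs (φ j))) ≤ dist f (u i) := by
      intro j
      haveI := hμs (φ j)
      rw [Real.dist_eq, ← integral_sub (cp_integrable f _) (cp_integrable (u i) _)]
      calc |∫ x, (f x - u i x) ∂(μs (φ j))| ≤ ‖f - u i‖ := by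
            have := cp_abs_integral_le (μs (φ j)) (f - u i)
            simpa [ContinuousMap.sub_apply] using this
        _ = dist f (u i) := (dist_eq_norm f (u i)).symm
    refine ⟨N, fun a ha b hb => ?_⟩
    have h1 := hfd a
    have h2 := hfd b
    have h3 := hN a ha b hb
    have hdi : dist f (u i) < ε / 4 := hi
    calc dist (∫ x, f x ∂(μs (φ a))) (∫ x, f x ∂(μs (φ b))) ≤
        dist (∫ x, f x ∂(μs (φ a))) (∫ x, u i x ∂(μs (φ a))) +
        dist (∫ x, u i x ∂(μs (φ a))) (∫ x, u i x ∂(μs (φ b))) +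
        dist (∫ x, u i x ∂(μs (φ b))) (∫ x, f x ∂(μs (φ b))) := dist_triangle4 _ _ _ _
      _ < ε := by
          have q1 : dist (∫ x, f x ∂(μs (φ a))) (∫ x, u i x ∂(μs (φ a))) < ε / 4 :=
            lt_of_le_of_lt h1 hdi
          have q2 : dist (∫ x, u i x ∂(μs (φ b))) (∫ x, f x ∂(μs (φ b))) ≤ dist f (u i) := by
            rw [dist_comm]; exact h2
          have q3 : dist (∫ x, u i x ∂(μs (φ b))) (∫ x, f x ∂(μs (φ b))) < ε / 4 :=
            lt_of_le_of_lt q2 hdi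
          linarith [h3]
  choose L hL using key
  have hadd : ∀ f g : C(X, ℝ), L (f + g) = L f + L g := by
    intro f g
    refine tendsto_nhds_unique (hL (f + g)) ?_
    have heq : (fun j => ∫ x, (f + g) x ∂(μs (φ j))) =
        fun j => (∫ x, f x ∂(μs (φ j))) + ∫ x, g x ∂(μs (φ j)) := by
      funext j
      haveI := hμs (φ j)
      simp only [ContinuousMap.add_apply]
      exact integral_add (cp_integrable f _) (cp_integrable g _)
    rw [heq]
    exact (hL f).add (hL g)
  have hsmulL : ∀ (a : ℝ) (f : C(X, ℝ)), L (a • f) = a * L f := by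
    intro a f
    refine tendsto_nhds_unique (hL (a • f)) ?_
    have heq : (fun j => ∫ x, (a • f) x ∂(μs (φ j))) =
        fun j => a * ∫ x, f x ∂(μs (φ j)) := by
      funext j
      simp only [ContinuousMap.smul_apply]
      rw [integral_smul]
      simp [smul_eq_mul]
    rw [heq]
    exact (hL f).const_mul a
  have hposL : ∀ f : C(X, ℝ), (∀ x, 0 ≤ f x) → 0 ≤ L f := by
    intro f hf
    exact ge_of_tendsto' (hL f) (fun j => integral_nonneg fun x => hf x)
  have honeL : L 1 = 1 := by
    refine tendsto_nhds_unique (hL 1) ?_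
    have heq : (fun j => ∫ x, (1 : C(X, ℝ)) x ∂(μs (φ j))) = fun _ => (1 : ℝ) := by
      funext j
      haveI := hμs (φ j)
      simp [ContinuousMap.one_apply]
    rw [heq]
    exact tendsto_const_nhds
  obtain ⟨μ, hμprob, hμint⟩ := cp_rmk L hadd hsmulL hposL honeL
  exact ⟨φ, μ, hφ, hμprob, fun f => by rw [hμint f]; exact hL f⟩

/-- Uniform (in the parameter) convergence of integrals of a continuous family of functions
along a weakly converging sequence of probability measures. -/
lemma cp_unif {Z' : Type*} [TopologicalSpace Z'] [CompactSpace Z']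
    (Φ : X → Z' → ℝ) (hΦ : Continuous fun p : X × Z' => Φ p.1 p.2)
    (μs : ℕ → Measure X) (μ : Measure X) (hμs : ∀ n, IsProbabilityMeasure (μs n))
    [IsProbabilityMeasure μ]
    (h : ∀ f : C(X, ℝ), Filter.Tendsto (fun j => ∫ x, f x ∂(μs j)) atTop (𝓝 (∫ x, f x ∂μ)))
    {ε : ℝ} (hε : 0 < ε) :
    ∀ᶠ j in atTop, ∀ w : Z', |(∫ x, Φ x w ∂(μs j)) - ∫ x, Φ x w ∂μ| < ε := by
  letI : MetricSpace X := TopologicalSpace.metrizableSpaceMetric X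
  set T : C(Z', C(X, ℝ)) := ContinuousMap.curry
    ⟨fun p : Z' × X => Φ p.2 p.1, hΦ.comp (continuous_snd.prodMk continuous_fst)⟩ with hT
  have hTw : ∀ (w : Z') (x : X), T w x = Φ x w := fun w x => rfl
  have hopen : ∀ w : Z', IsOpen {w' : Z' | dist (T w') (T w) < ε / 3} :=
    fun w => isOpen_lt (Continuous.dist T.continuous continuous_const) continuous_const
  have hcov : (Set.univ : Set Z') ⊆ ⋃ w : Z', {w' : Z' | dist (T w') (T w) < ε / 3} := by
    intro w _
    exact Set.mem_iUnion.mpr ⟨w, by simp only [Set.mem_setOf_eq, dist_self]; positivity⟩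
  obtain ⟨t, ht⟩ := isCompact_univ.elim_finite_subcover
    (fun w : Z' => {w' : Z' | dist (T w') (T w) < ε / 3}) hopen hcov
  have hev : ∀ᶠ j in atTop, ∀ w ∈ t, |(∫ x, T w x ∂(μs j)) - ∫ x, T w x ∂μ| < ε / 3 := by
    rw [eventually_all_finset]
    intro w _
    have h1 : Filter.Tendsto (fun j => ∫ x, T w x ∂(μs j)) atTop (𝓝 (∫ x, T w x ∂μ)) := h (T w)
    have h2 := Metric.tendsto_nhds.mp h1 (ε / 3) (by positivity)
    filter_upwards [h2] with j hj
    rwa [Real.dist_eq] at hj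
  filter_upwards [hev] with j hj
  intro w
  haveI := hμs j
  have hmem : w ∈ ⋃ w₀ ∈ t, {w' : Z' | dist (T w') (T w₀) < ε / 3} := ht (Set.mem_univ w)
  obtain ⟨w₀, hw₀t, hw₀⟩ := Set.mem_iUnion₂.mp hmem
  have hdist : dist (T w) (T w₀) < ε / 3 := hw₀
  have hbd : ∀ (ν : Measure X), IsProbabilityMeasure ν →
      |(∫ x, T w x ∂ν) - ∫ x, T w₀ x ∂ν| ≤ dist (T w) (T w₀) := by
    intro ν hν
    haveI := hν
    rw [← integral_sub (cp_integrable (T w) _) (cp_integrable (T w₀) _)]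
    calc |∫ x, (T w x - T w₀ x) ∂ν| ≤ ‖T w - T w₀‖ := by
          have := cp_abs_integral_le ν (T w - T w₀)
          simpa [ContinuousMap.sub_apply] using this
      _ = dist (T w) (T w₀) := (dist_eq_norm _ _).symm
  have e1 := hbd (μs j) (hμs j)
  have e3 := hbd μ inferInstance
  have e2 := hj w₀ hw₀t
  have hcalc : |(∫ x, T w x ∂(μs j)) - ∫ x, T w x ∂μ| < ε := by
    have habs : ∀ a b c d : ℝ, |a - b| ≤ |a - c| + |c - d| + |d - b| := by
      intro a b c d
      calc |a - b| = |(a - c) + (c - d) + (d - b)| := by ring_nf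
        _ ≤ |a - c| + |c - d| + |d - b| := by
            calc |(a - c) + (c - d) + (d - b)| ≤ |(a - c) + (c - d)| + |d - b| := abs_add_le _ _
              _ ≤ |a - c| + |c - d| + |d - b| := by linarith [abs_add_le (a - c) (c - d)]
    calc |(∫ x, T w x ∂(μs j)) - ∫ x, T w x ∂μ| ≤
        |(∫ x, T w x ∂(μs j)) - ∫ x, T w₀ x ∂(μs j)| +
        |(∫ x, T w₀ x ∂(μs j)) - ∫ x, T w₀ x ∂μ| +
        |(∫ x, T w₀ x ∂μ) - ∫ x, T w x ∂μ| := habs _ _ _ _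
      _ < ε / 3 + ε / 3 + ε / 3 := by
          have e3' : |(∫ x, T w₀ x ∂μ) - ∫ x, T w x ∂μ| ≤ dist (T w) (T w₀) := by
            rw [abs_sub_comm]; exact e3
          have := lt_of_le_of_lt e1 hdist
          have := lt_of_le_of_lt e3' hdist
          linarith
      _ = ε := by ring
  simpa only [hTw] using hcalc

/-- Weak convergence of the product measures. -/
lemma cp_prod (μs : ℕ → Measure X) (μ : Measure X) (hμs : ∀ n, IsProbabilityMeasure (μs n))
    [IsProbabilityMeasure μ]
    (h : ∀ f : C(X, ℝ), Filter.Tendsto (fun j => ∫ x, f x ∂(μs j)) atTop (𝓝 (∫ x, f x ∂μ)))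
    (f : C(X × X, ℝ)) :
    Filter.Tendsto (fun j => ∫ p, f p ∂((μs j).prod (μs j))) atTop
      (𝓝 (∫ p, f p ∂(μ.prod μ))) := by
  letI : MetricSpace X := TopologicalSpace.metrizableSpaceMetric X
  haveI : SecondCountableTopology X := EMetric.secondCountable_of_sigmaCompact X
  -- continuity of slice integrals
  have hlip : ∀ (ν : Measure X), IsProbabilityMeasure ν →
      LipschitzWith 1 (fun q : C(X, ℝ) => ∫ y, q y ∂ν) := by
    intro ν hν
    haveI := hν
    apply LipschitzWith.of_dist_le_mul
    intro q₁ q₂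
    rw [NNReal.coe_one, one_mul, Real.dist_eq,
      ← integral_sub (cp_integrable q₁ ν) (cp_integrable q₂ ν)]
    calc |∫ y, (q₁ y - q₂ y) ∂ν| ≤ ‖q₁ - q₂‖ := by
          have := cp_abs_integral_le ν (q₁ - q₂)
          simpa [ContinuousMap.sub_apply] using this
      _ = dist q₁ q₂ := (dist_eq_norm _ _).symm
  have hcont : ∀ (ν : Measure X), IsProbabilityMeasure ν →
      Continuous (fun x => ∫ y, f (x, y) ∂ν) := by
    intro ν hν
    have : (fun x => ∫ y, f (x, y) ∂ν) =
        (fun q : C(X, ℝ) => ∫ y, q y ∂ν) ∘ (fun x => f.curry x) := rfl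
    rw [this]
    exact ((hlip ν hν).continuous).comp f.curry.continuous
  -- Fubini
  have hfub : ∀ (ν : Measure X), IsProbabilityMeasure ν →
      ∫ p, f p ∂(ν.prod ν) = ∫ x, ∫ y, f (x, y) ∂ν ∂ν := by
    intro ν hν
    haveI := hν
    rw [← MeasureTheory.integral_prod _ (cp_integrable f (ν.prod ν))]
  -- uniform convergence of slice integrals
  rw [Metric.tendsto_atTop]
  intro ε hε
  set a : C(X, ℝ) := ⟨fun x => ∫ y, f (x, y) ∂μ, hcont μ inferInstance⟩ with ha
  have hunif := cp_unif (fun y x => f (x, y))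
    (f.continuous.comp (continuous_snd.prodMk continuous_fst)) μs μ hμs h
    (show (0:ℝ) < ε / 3 by positivity)
  have haconv := Metric.tendsto_nhds.mp (h a) (ε / 3) (by positivity)
  obtain ⟨N₁, hN₁⟩ := (Filter.eventually_atTop).mp hunif
  obtain ⟨N₂, hN₂⟩ := (Filter.eventually_atTop).mp haconv
  refine ⟨max N₁ N₂, fun j hj => ?_⟩
  haveI := hμs j
  have hj₁ : N₁ ≤ j := le_trans (le_max_left _ _) hj
  have hj₂ : N₂ ≤ j := le_trans (le_max_right _ _) hj
  set aj : C(X, ℝ) := ⟨fun x => ∫ y, f (x, y) ∂(μs j), hcont (μs j) (hμs j)⟩ with haj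
  have hsplit : ∫ p, f p ∂((μs j).prod (μs j)) = ∫ x, aj x ∂(μs j) := hfub (μs j) (hμs j)
  have hsplit' : ∫ p, f p ∂(μ.prod μ) = ∫ x, a x ∂μ := hfub μ inferInstance
  rw [Real.dist_eq, hsplit, hsplit']
  have hterm1 : |(∫ x, aj x ∂(μs j)) - ∫ x, a x ∂(μs j)| ≤ ε / 3 := by
    rw [← integral_sub (cp_integrable aj _) (cp_integrable a _)]
    have hb : ∀ x, ‖aj x - a x‖ ≤ ε / 3 := by
      intro x
      rw [Real.norm_eq_abs]
      exact (hN₁ j hj₁ x).le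
    have := norm_integral_le_of_norm_le_const (μ := μs j)
      (f := fun x => aj x - a x) (C := ε / 3) (Filter.Eventually.of_forall hb)
    simpa [Real.norm_eq_abs, measure_univ] using this
  have hterm2 : |(∫ x, a x ∂(μs j)) - ∫ x, a x ∂μ| < ε / 3 := by
    have := hN₂ j hj₂
    rwa [Real.dist_eq] at this
  calc |(∫ x, aj x ∂(μs j)) - ∫ x, a x ∂μ| ≤
      |(∫ x, aj x ∂(μs j)) - ∫ x, a x ∂(μs j)| +
      |(∫ x, a x ∂(μs j)) - ∫ x, a x ∂μ| := by
        have : (∫ x, aj x ∂(μs j)) - ∫ x, a x ∂μ =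
            ((∫ x, aj x ∂(μs j)) - ∫ x, a x ∂(μs j)) +
            ((∫ x, a x ∂(μs j)) - ∫ x, a x ∂μ) := by ring
        rw [this]
        exact abs_add_le _ _
    _ < ε / 3 + ε / 3 := by linarith
    _ < ε := by linarith

/-- From weak convergence (tested on bounded continuous functions) to the liminf inequality
on open sets, via the portmanteau theorem. -/
lemma cp_opens {Y : Type*} [MeasurableSpace Y] [PseudoEMetricSpace Y] [OpensMeasurableSpace Y]
    (νs : ℕ → Measure Y) (ν : Measure Y) (hνs : ∀ n, IsProbabilityMeasure (νs n))
    (hν : IsProbabilityMeasure ν)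
    (h : ∀ f : BoundedContinuousFunction Y ℝ,
      Filter.Tendsto (fun j => ∫ y, f y ∂(νs j)) atTop (𝓝 (∫ y, f y ∂ν)))
    {G : Set Y} (hG : IsOpen G) :
    ν G ≤ atTop.liminf (fun j => νs j G) := by
  let P : ProbabilityMeasure Y := ⟨ν, hν⟩
  let Ps : ℕ → ProbabilityMeasure Y := fun j => ⟨νs j, hνs j⟩
  have hT : Filter.Tendsto Ps atTop (𝓝 P) :=
    ProbabilityMeasure.tendsto_iff_forall_integral_tendsto.mpr (fun f => h f)
  exact ProbabilityMeasure.le_liminf_measure_open_of_tendsto hT hG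

/-- Portmanteau-type inequality for lower semicontinuous `ℝ≥0∞`-valued functions. -/
lemma cp_lsc {Y : Type*} [MeasurableSpace Y] [TopologicalSpace Y] [OpensMeasurableSpace Y]
    {ν : Measure Y} {νs : ℕ → Measure Y} {F : Y → ℝ≥0∞} (hF : LowerSemicontinuous F)
    (h_opens : ∀ G, IsOpen G → ν G ≤ atTop.liminf (fun j => νs j G)) :
    ∫⁻ y, F y ∂ν ≤ atTop.liminf (fun j => ∫⁻ y, F y ∂(νs j)) := by
  have hFm : Measurable F := hF.measurable
  have htr : ∀ n : ℕ, ∫⁻ y, min (F y) n ∂ν ≤ atTop.liminf (fun j => ∫⁻ y, F y ∂(νs j)) := by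
    intro n
    set G' : Y → ℝ≥0∞ := fun y => min (F y) n with hG'def
    have hGm : Measurable G' := hFm.min measurable_const
    have hGne : ∀ y, G' y ≠ ⊤ :=
      fun y => ne_top_of_le_ne_top (ENNReal.natCast_ne_top n) (min_le_right _ _)
    set gr : Y → ℝ := fun y => (G' y).toReal with hgr
    have hgr_nn : ∀ y, 0 ≤ gr y := fun y => ENNReal.toReal_nonneg
    have hofReal : ∀ y, ENNReal.ofReal (gr y) = G' y := fun y => ENNReal.ofReal_toReal (hGne y)
    have hkeyM : ∀ ρ : Measure Y, ∫⁻ y, G' y ∂ρ = ∫⁻ t in Set.Ioi (0:ℝ), ρ {a | t < gr a} := by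
      intro ρ
      rw [← MeasureTheory.lintegral_eq_lintegral_meas_lt ρ
        (Filter.Eventually.of_forall hgr_nn) (hGm.ennreal_toReal.aemeasurable)]
      exact lintegral_congr fun y => (hofReal y).symm
    have hopen_t : ∀ t : ℝ, 0 < t → IsOpen {a : Y | t < gr a} := by
      intro t ht
      have hset : {a : Y | t < gr a} =
          {a : Y | (ENNReal.ofReal t) < F a} ∩ {a : Y | (ENNReal.ofReal t) < (n : ℝ≥0∞)} := by
        ext a
        simp only [Set.mem_setOf_eq, Set.mem_inter_iff]
        rw [show gr a = (G' a).toReal from rfl,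
          ← ENNReal.ofReal_lt_iff_lt_toReal ht.le (hGne a), hG'def, lt_min_iff]
      rw [hset]
      by_cases hc : (ENNReal.ofReal t) < (n : ℝ≥0∞)
      · have : {a : Y | (ENNReal.ofReal t) < (n : ℝ≥0∞)} = Set.univ :=
          Set.eq_univ_of_forall fun a => hc
        rw [this, Set.inter_univ]
        exact hF.isOpen_preimage _
      · have : {a : Y | (ENNReal.ofReal t) < (n : ℝ≥0∞)} = ∅ := by
          apply Set.eq_empty_of_forall_notMem
          intro a
          exact hc
        rw [this, Set.inter_empty]
        exact isOpen_empty
    calc ∫⁻ y, G' y ∂ν = ∫⁻ t in Set.Ioi (0:ℝ), ν {a | t < gr a} := hkeyM ν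
      _ ≤ ∫⁻ t in Set.Ioi (0:ℝ), atTop.liminf (fun j => νs j {a | t < gr a}) := by
          refine lintegral_mono_ae ?_
          filter_upwards [ae_restrict_mem measurableSet_Ioi] with t ht
          exact h_opens _ (hopen_t t ht)
      _ ≤ atTop.liminf (fun j => ∫⁻ t in Set.Ioi (0:ℝ), νs j {a | t < gr a}) :=
          lintegral_liminf_le fun j => Antitone.measurable
            (fun s t hst => measure_mono fun a ha => lt_of_le_of_lt hst ha)
      _ ≤ atTop.liminf (fun j => ∫⁻ y, F y ∂(νs j)) :=
          Filter.liminf_le_liminf (Filter.Eventually.of_forall fun j => by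
            rw [← hkeyM (νs j)]
            exact lintegral_mono fun y => min_le_left _ _)
  have hsup : ∫⁻ y, F y ∂ν = ⨆ n : ℕ, ∫⁻ y, min (F y) n ∂ν := by
    have hmm : Monotone fun (n : ℕ) => fun (y : Y) => min (F y) (n : ℝ≥0∞) := by
      intro a b hab y
      exact min_le_min le_rfl (by exact_mod_cast Nat.cast_le.mpr hab)
    have hls := MeasureTheory.lintegral_iSup (μ := ν)
      (f := fun (n : ℕ) (y : Y) => min (F y) (n : ℝ≥0∞))
      (fun n => hFm.min measurable_const) hmm
    rw [← hls]
    apply lintegral_congr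
    intro y
    have h1 : F y ⊓ (⨆ n : ℕ, (n : ℝ≥0∞)) = ⨆ n : ℕ, F y ⊓ (n : ℝ≥0∞) :=
      inf_iSup_eq _ _
    have h2 : (⨆ n : ℕ, min (F y) (n : ℝ≥0∞)) = ⨆ n : ℕ, F y ⊓ (n : ℝ≥0∞) := by
      simp
    rw [h2, ← h1, ENNReal.iSup_natCast, inf_top_eq]
  rw [hsup]
  exact iSup_le htr

end CuttingPlaneAux

/-- Lemma 8, equality case: the cutting plane algorithm converges,
`lim_n w(R^e_{Φ,g,Z_{2n}}(X)) = w(R^e_{Φ,g}(X))`. -/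
theorem statement17 {X Z : Type*}
    [TopologicalSpace X] [CompactSpace X] [TopologicalSpace.MetrizableSpace X]
    [MeasurableSpace X] [BorelSpace X]
    [TopologicalSpace Z] [CompactSpace Z] [TopologicalSpace.MetrizableSpace Z]
    (Φ : X → Z → ℝ) (hΦ : Continuous fun p : X × Z => Φ p.1 p.2)
    (g : Z → ℝ) (hg : Continuous g)
    (k : X → X → ℝ≥0∞) (hk : LowerSemicontinuous fun p : X × X => k p.1 p.2)
    (hsym : ∀ x y, k x y = k y x)
    (hne : (Re Φ g Set.univ).Nonempty)
    (z : ℕ → Z) (μn : ℕ → Measure X)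
    -- `μn n` is a minimizer of the energy over `R^e_{Φ,g,Z_{2n}}(X)`
    (hmem : ∀ n, 1 ≤ n → μn n ∈ Re Φ g (z '' Set.Icc 1 (2 * n)))
    (hmin : ∀ n, 1 ≤ n → ∀ ν ∈ Re Φ g (z '' Set.Icc 1 (2 * n)),
      energy k (μn n) (μn n) ≤ energy k ν ν)
    -- `z (2n+1)` minimizes and `z (2n+2)` maximizes `Ψ_n` on `Z`
    (hext : ∀ n, 1 ≤ n →
      (∀ w : Z, (∫ x, Φ x (z (2 * n + 1)) ∂(μn n)) - g (z (2 * n + 1)) ≤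
        (∫ x, Φ x w ∂(μn n)) - g w) ∧
      (∀ w : Z, (∫ x, Φ x w ∂(μn n)) - g w ≤
        (∫ x, Φ x (z (2 * n + 2)) ∂(μn n)) - g (z (2 * n + 2)))) :
    Filter.Tendsto (fun n => ww k (Re Φ g (z '' Set.Icc 1 (2 * n)))) Filter.atTop
      (𝓝 (ww k (Re Φ g Set.univ))) := by
  classical
  set f : ℕ → ℝ≥0∞ := fun n => ww k (Re Φ g (z '' Set.Icc 1 (2 * n))) with hfdef
  have hRe_mono : ∀ {A B : Set Z}, A ⊆ B → Re Φ g B ⊆ Re Φ g A :=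
    fun hAB μ hμ => ⟨hμ.1, fun w hw => hμ.2 w (hAB hw)⟩
  have hww_le : ∀ {R S : Set (Measure X)}, R ⊆ S → ww k S ≤ ww k R :=
    fun hRS => le_iInf₂ fun μ hμ => iInf₂_le μ (hRS hμ)
  have hmono : Monotone f := by
    intro a b hab
    exact hww_le (hRe_mono (Set.image_mono (f := z) (Set.Icc_subset_Icc le_rfl (by omega))))
  have hfS : Filter.Tendsto f atTop (𝓝 (⨆ n, f n)) := tendsto_atTop_iSup hmono
  set S : ℝ≥0∞ := ⨆ n, f n with hSdef
  have hle : S ≤ ww k (Re Φ g Set.univ) :=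
    iSup_le fun n => hww_le (hRe_mono (Set.subset_univ _))
  suffices hgoal : ww k (Re Φ g Set.univ) ≤ S by
    have hEq : S = ww k (Re Φ g Set.univ) := le_antisymm hle hgoal
    rwa [hEq] at hfS
  -- The hard direction.
  letI : MetricSpace X := TopologicalSpace.metrizableSpaceMetric X
  haveI : SecondCountableTopology X := EMetric.secondCountable_of_sigmaCompact X
  set μs : ℕ → Measure X := fun j => μn (j + 1) with hμsdef
  have hμsmem : ∀ j, μs j ∈ Re Φ g (z '' Set.Icc 1 (2 * (j + 1))) :=
    fun j => hmem (j + 1) (by omega)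
  have hμsprob : ∀ j, IsProbabilityMeasure (μs j) := fun j => (hμsmem j).1
  obtain ⟨φ, μ, hφ, hμprob, hμconv⟩ := cp_exists_subseq μs hμsprob
  haveI := hμprob
  -- limit constraints at the sample points
  have hconA : ∀ i, 1 ≤ i → ∫ x, Φ x (z i) ∂μ = g (z i) := by
    intro i hi
    have hc : Continuous fun x => Φ x (z i) := hΦ.comp (continuous_id.prodMk continuous_const)
    have hTd := hμconv ⟨fun x => Φ x (z i), hc⟩
    have hev : ∀ᶠ j in atTop, (∫ x, Φ x (z i) ∂(μs (φ j))) = g (z i) := by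
      filter_upwards [eventually_ge_atTop i] with j hj
      have hφj : j ≤ φ j := hφ.le_apply
      exact (hμsmem (φ j)).2 (z i) ⟨i, ⟨hi, by omega⟩, rfl⟩
    have hTd' : Filter.Tendsto (fun j => ∫ x, Φ x (z i) ∂(μs (φ j))) atTop (𝓝 (g (z i))) :=
      Filter.Tendsto.congr' (hev.mono fun j hj => hj.symm) tendsto_const_nhds
    exact tendsto_nhds_unique hTd hTd'
  -- the limit measure satisfies all constraints
  have hμRe : μ ∈ Re Φ g Set.univ := by
    refine ⟨hμprob, fun w _ => ?_⟩
    have habs : ∀ ε : ℝ, 0 < ε → |(∫ x, Φ x w ∂μ) - g w| ≤ ε := by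
      intro ε hε
      have hunif := cp_unif Φ hΦ (fun j => μs (φ j)) μ (fun j => hμsprob (φ j)) hμconv
        (half_pos hε)
      obtain ⟨j, hj⟩ := hunif.exists
      haveI := hμsprob (φ j)
      have hext' := hext (φ j + 1) (by omega)
      set mj : ℕ := φ j + 1 with hmj
      have b2 : |(∫ x, Φ x w ∂(μn mj)) - ∫ x, Φ x w ∂μ| < ε / 2 := hj w
      have b3 : |(∫ x, Φ x (z (2 * mj + 2)) ∂(μn mj)) - ∫ x, Φ x (z (2 * mj + 2)) ∂μ| < ε / 2 :=
        hj (z (2 * mj + 2))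
      have b3' : |(∫ x, Φ x (z (2 * mj + 1)) ∂(μn mj)) - ∫ x, Φ x (z (2 * mj + 1)) ∂μ| < ε / 2 :=
        hj (z (2 * mj + 1))
      have b4 : (∫ x, Φ x (z (2 * mj + 2)) ∂μ) = g (z (2 * mj + 2)) := hconA _ (by omega)
      have b4' : (∫ x, Φ x (z (2 * mj + 1)) ∂μ) = g (z (2 * mj + 1)) := hconA _ (by omega)
      have bup : (∫ x, Φ x w ∂(μn mj)) - g w ≤
          (∫ x, Φ x (z (2 * mj + 2)) ∂(μn mj)) - g (z (2 * mj + 2)) := hext'.2 w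
      have bdn : (∫ x, Φ x (z (2 * mj + 1)) ∂(μn mj)) - g (z (2 * mj + 1)) ≤
          (∫ x, Φ x w ∂(μn mj)) - g w := hext'.1 w
      have c2 := abs_lt.mp b2
      have c3 := abs_lt.mp b3
      have c3' := abs_lt.mp b3'
      rw [abs_le]
      constructor
      · nlinarith [c2.1, c2.2, c3'.1, c3'.2]
      · nlinarith [c2.1, c2.2, c3.1, c3.2]
    have h0 : |(∫ x, Φ x w ∂μ) - g w| ≤ 0 := by
      apply _root_.le_of_forall_pos_le_add
      intro ε hε
      simpa using habs ε hε
    have h1 : (∫ x, Φ x w ∂μ) - g w = 0 := by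
      have habs0 : |(∫ x, Φ x w ∂μ) - g w| = 0 := le_antisymm h0 (abs_nonneg _)
      exact abs_eq_zero.mp habs0
    linarith [h1]
  -- energy of the minimizers is bounded by `S`
  have hEn : ∀ j : ℕ, energy k (μs (φ j)) (μs (φ j)) ≤ S := by
    intro j
    have hEle : energy k (μn (φ j + 1)) (μn (φ j + 1)) ≤ f (φ j + 1) :=
      le_iInf₂ fun ν hν => hmin (φ j + 1) (by omega) ν hν
    exact le_trans hEle (le_iSup f (φ j + 1))
  -- weak convergence of the product measures and portmanteau
  haveI : ∀ j, IsProbabilityMeasure ((μs (φ j)).prod (μs (φ j))) := by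
    intro j
    haveI := hμsprob (φ j)
    infer_instance
  have hopens : ∀ G : Set (X × X), IsOpen G →
      (μ.prod μ) G ≤ atTop.liminf (fun j => ((μs (φ j)).prod (μs (φ j))) G) := by
    intro G hG
    refine cp_opens (fun j => (μs (φ j)).prod (μs (φ j))) (μ.prod μ)
      (fun j => inferInstance) inferInstance (fun fb => ?_) hG
    exact cp_prod (fun j => μs (φ j)) μ (fun j => hμsprob (φ j)) hμconv fb.toContinuousMap
  have hlsc : energy k μ μ ≤ atTop.liminf (fun j => energy k (μs (φ j)) (μs (φ j))) :=
    cp_lsc hk hopens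
  have hliminf_le : atTop.liminf (fun j => energy k (μs (φ j)) (μs (φ j))) ≤ S :=
    Filter.liminf_le_of_frequently_le (Filter.Frequently.of_forall fun j => hEn j)
  have hfinal : ww k (Re Φ g Set.univ) ≤ energy k μ μ := iInf₂_le μ hμRe
  exact le_trans hfinal (le_trans hlsc hliminf_le)

end
end
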